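/- For every natural number k, the identity 2·(J_{2k+1} − 1) − X · J_{2k} = (X − 2) · (J_k + J_{k−1})² holds in ℚ[X] (with J_{−1} = 0). -/

import Mathlib

open Polynomial

/-- The Chebyshev-type polynomials `J k ∈ ℚ[X]` for natural indices:
`J 0 = 1`, `J 1 = X`, and `J (k+2) = X·J (k+1) - J k`;
equivalently `J k (x) = U k (x/2)` with `U k` the Chebyshev polynomial
of the second kind. -/
noncomputable def Jnat : ℕ → ℚ[X]
  | 0 => 1
  | 1 => X
  | (n + 2) => X * Jnat (n + 1) - Jnat n

/-- The extension of `Jnat` to integer indices, satisfying the same recurrence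
`J (k+2) = X·J (k+1) - J k` for all `k ∈ ℤ`; in particular `J (-1) = 0` and
`J (-(n+2)) = - J n`. -/
noncomputable def J : ℤ → ℚ[X]
  | Int.ofNat n => Jnat n
  | Int.negSucc 0 => 0
  | Int.negSucc (n + 1) => -Jnat n

lemma Jnat_add_two (n : ℕ) : Jnat (n + 2) = X * Jnat (n + 1) - Jnat n := rfl

/-- Addition formula. -/
lemma Jnat_add (m n : ℕ) :
    Jnat (m + n + 2) = Jnat (m + 1) * Jnat (n + 1) - Jnat m * Jnat n := by
  induction n using Nat.strong_induction_on generalizing m with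
  | _ n ih =>
    match n with
    | 0 => simp [Jnat_add_two m, Jnat]; ring
    | 1 =>
      have h1 : m + 1 + 2 = m + 3 := by ring
      have : Jnat (m + 3) = X * Jnat (m + 2) - Jnat (m + 1) := Jnat_add_two (m + 1)
      show Jnat (m + 3) = _
      rw [this, Jnat_add_two m]
      simp [Jnat]; ring
    | (n + 2) =>
      have h1 := ih n (by omega) m
      have h2 := ih (n + 1) (by omega) m
      have e : m + (n + 2) + 2 = (m + n + 2) + 2 := by ring
      rw [e, Jnat_add_two (m + n + 2)]
      have e2 : m + n + 2 + 1 = m + (n + 1) + 2 := by ring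
      rw [e2, h2, h1, Jnat_add_two (n + 1), Jnat_add_two n]
      ring

/-- Determinant identity. -/
lemma Jnat_det (n : ℕ) :
    Jnat (n + 1) ^ 2 - X * Jnat (n + 1) * Jnat n + Jnat n ^ 2 = 1 := by
  induction n with
  | zero => simp [Jnat]; ring
  | succ n ih =>
    rw [Jnat_add_two n]
    linear_combination ih

lemma J_natCast (n : ℕ) : J (n : ℤ) = Jnat n := rfl

/-- Factorization of the characteristic polynomial of the odd cyclic torus
knot: `2·(J (2k+1) - 1) - X·J (2k) = (X - 2)·(J k + J (k-1))²`
(with `J (-1) = 0`). -/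
theorem cyclic_torus_knot_factorization (k : ℕ) :
    2 * (J (2 * k + 1) - 1) - X * J (2 * k) =
      (X - 2) * (J k + J ((k : ℤ) - 1)) ^ 2 := by
  match k with
  | 0 =>
    show (2 : ℚ[X]) * (X - 1) - X * 1 = (X - 2) * (1 + 0) ^ 2
    ring
  | (j + 1) =>
    have e1 : (2 * ((j : ℤ) + 1) + 1) = ((2 * j + 3 : ℕ) : ℤ) := by push_cast; ring
    have e2 : (2 * ((j : ℤ) + 1)) = ((2 * j + 2 : ℕ) : ℤ) := by push_cast; ring
    have e3 : ((j : ℤ) + 1) = ((j + 1 : ℕ) : ℤ) := by push_cast; ring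
    have e4 : ((j + 1 : ℕ) : ℤ) - 1 = ((j : ℕ) : ℤ) := by push_cast; ring
    push_cast
    rw [e1, e2, e3, e4, J_natCast, J_natCast, J_natCast, J_natCast]
    have h1 : Jnat (2 * j + 3) = Jnat (j + 2) * Jnat (j + 1) - Jnat (j + 1) * Jnat j := by
      have := Jnat_add (j + 1) j
      rw [show j + 1 + j + 2 = 2 * j + 3 by ring] at this
      linear_combination this
    have h2 : Jnat (2 * j + 2) = Jnat (j + 1) * Jnat (j + 1) - Jnat j * Jnat j := by
      have := Jnat_add j j
      rw [show j + j + 2 = 2 * j + 2 by ring] at this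
      exact this
    rw [h1, h2, Jnat_add_two j]
    linear_combination 2 * Jnat_det j
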